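/- There is an absolute constant C > 0 such that for all positive integers n, k, d and all reals ε > 0, δ > 0, 0 < γ ≤ 1, there exists a one-query (ε′, kδ+γ)-steward for k adaptively chosen (ε,δ)-concentrated functions f : {0,1}^n → ℝ^d with error ε′ ≤ C·k·d·ε/γ and randomness complexity m ≤ n + C·k·(log₂ k + log₂ d + log₂(1/γ) + 1). -/

import Mathlib

open Classical

/-- Probability of `P` under the uniform distribution on a finite type. -/
noncomputable def pr {α : Type*} [Fintype α] (P : α → Prop) : ℝ :=
  ((Finset.univ.filter P).card : ℝ) / (Fintype.card α : ℝ)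

/-- `f : {0,1}^n → ℝ^d` is `(ε,δ)`-concentrated at `μ`. -/
def Concentrated (n d : ℕ) (ε δ : ℝ)
    (f : (Fin n → Bool) → Fin d → ℝ) (μ : Fin d → ℝ) : Prop :=
  pr (fun X : Fin n → Bool => ∃ j, |f X j - μ j| > ε) ≤ δ

/-- A deterministic owner for `k` rounds of `(ε,δ)`-concentrated functions
`{0,1}^n → ℝ^d`: given the history of responses `Y_1,…,Y_{i-1}`, it produces
a function `f_i` together with a point `μ_i` at which `f_i` is concentrated. -/
structure Owner (n k d : ℕ) (ε δ : ℝ) where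
  act : List (Fin d → ℝ) → (((Fin n → Bool) → Fin d → ℝ) × (Fin d → ℝ))
  conc : ∀ ys : List (Fin d → ℝ), ys.length < k →
    Concentrated n d ε δ (act ys).1 (act ys).2

/-- A one-query steward with randomness complexity `m`: in each round it chooses
a query point from its randomness and the past query answers, and it chooses a
response from its randomness and the past and current query answers. -/
structure Steward (n k d m : ℕ) where
  q : (Fin m → Bool) → List (Fin d → ℝ) → (Fin n → Bool)
  r : (Fin m → Bool) → List (Fin d → ℝ) → (Fin d → ℝ) → (Fin d → ℝ)

/-- The interaction `O ↔ S(Z)` for `i` rounds: the list of triples `(Y_i, W_i, μ_i)`. -/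
noncomputable def run {n k d m : ℕ} {ε δ : ℝ} (O : Owner n k d ε δ) (S : Steward n k d m)
    (Z : Fin m → Bool) : ℕ → List ((Fin d → ℝ) × (Fin d → ℝ) × (Fin d → ℝ))
  | 0 => []
  | i + 1 =>
    let h := run O S Z i
    let fμ := O.act (h.map fun p => p.1)
    let X := S.q Z (h.map fun p => p.2.1)
    let W := fμ.1 X
    h ++ [(S.r Z (h.map fun p => p.2.1) W, W, fμ.2)]

/-- `S` is a one-query `(ε',δ')`-steward for `k` adaptively chosen
`(ε,δ)`-concentrated functions `{0,1}^n → ℝ^d`. -/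
def IsSteward (n k d m : ℕ) (ε δ ε' δ' : ℝ) (S : Steward n k d m) : Prop :=
  ∀ O : Owner n k d ε δ,
    pr (fun Z : Fin m → Bool =>
      ∃ p ∈ run O S Z k, ∃ j : Fin d, |p.1 j - p.2.2 j| > ε') ≤ δ'

section PR
variable {α β : Type*} [Fintype α] [Fintype β]

private lemma mydiv {a b c : ℝ} (h : a ≤ b) (hc : 0 ≤ c) : a / c ≤ b / c := by
  rcases eq_or_lt_of_le hc with rfl | hc
  · simp
  · exact (div_le_div_iff_of_pos_right hc).mpr h

lemma pr_nonneg (P : α → Prop) : 0 ≤ pr P := by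
  unfold pr; positivity

lemma pr_mono {P Q : α → Prop} (h : ∀ a, P a → Q a) : pr P ≤ pr Q := by
  unfold pr
  apply mydiv _ (by positivity)
  have : Finset.univ.filter P ⊆ Finset.univ.filter Q := by
    intro a ha
    simp only [Finset.mem_filter, Finset.mem_univ, true_and] at *
    exact h a ha
  exact_mod_cast Finset.card_le_card this

lemma pr_or (P Q : α → Prop) : pr (fun a => P a ∨ Q a) ≤ pr P + pr Q := by
  unfold pr
  rw [← add_div]
  apply mydiv _ (by positivity)
  have h2 : Finset.univ.filter (fun a => P a ∨ Q a) ⊆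
      Finset.univ.filter P ∪ Finset.univ.filter Q := by
    intro a ha
    simp only [Finset.mem_filter, Finset.mem_union, Finset.mem_univ, true_and] at *
    tauto
  have h3 := le_trans (Finset.card_le_card h2) (Finset.card_union_le _ _)
  rw [Finset.filter_congr_decidable]
  exact_mod_cast h3

lemma pr_exists_fin {k : ℕ} (P : Fin k → α → Prop) :
    pr (fun a => ∃ i, P i a) ≤ ∑ i, pr (P i) := by
  unfold pr
  rw [← Finset.sum_div]
  apply mydiv _ (by positivity)
  have h2 : Finset.univ.filter (fun a => ∃ i, P i a) ⊆
      Finset.univ.biUnion (fun i : Fin k => Finset.univ.filter (P i)) := by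
    intro a ha
    simp only [Finset.mem_filter, Finset.mem_biUnion, Finset.mem_univ, true_and] at *
    obtain ⟨i, hi⟩ := ha; exact ⟨i, hi⟩
  have h3 : (Finset.univ.filter (fun a => ∃ i, P i a)).card
      ≤ ∑ i, (Finset.univ.filter (P i)).card :=
    le_trans (Finset.card_le_card h2) Finset.card_biUnion_le
  rw [Finset.filter_congr_decidable]
  exact_mod_cast h3

lemma pr_comp_equiv (e : α ≃ β) (P : β → Prop) : pr (fun a => P (e a)) = pr P := by
  unfold pr
  congr 1
  · congr 1
    apply Finset.card_bij (fun a _ => e a)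
    · intro a ha; simp only [Finset.mem_filter, Finset.mem_univ, true_and] at *; exact ha
    · intro a _ b _ h; exact e.injective h
    · intro b hb
      refine ⟨e.symm b, ?_, by simp⟩
      simp only [Finset.mem_filter, Finset.mem_univ, true_and, Equiv.apply_symm_apply] at *
      exact hb
  · exact_mod_cast Fintype.card_congr e

lemma card_filter_prod (P : α → β → Prop) :
    (Finset.univ.filter (fun p : α × β => P p.1 p.2)).card
      = ∑ b : β, (Finset.univ.filter (fun a => P a b)).card := by
  rw [Finset.card_filter]
  rw [← Finset.univ_product_univ, Finset.sum_product_right]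
  congr 1
  ext b
  rw [Finset.card_filter]

lemma pr_fiber_le [Nonempty α] [Nonempty β] {P : α → β → Prop} {c : ℝ}
    (h : ∀ b, pr (fun a => P a b) ≤ c) :
    pr (fun p : α × β => P p.1 p.2) ≤ c := by
  have hα : (0:ℝ) < Fintype.card α := by exact_mod_cast Fintype.card_pos
  have hβ : (0:ℝ) < Fintype.card β := by exact_mod_cast Fintype.card_pos
  unfold pr
  rw [div_le_iff₀ (by rw [Fintype.card_prod]; push_cast; positivity)]
  rw [card_filter_prod, Fintype.card_prod]
  push_cast
  calc ∑ b : β, ((Finset.univ.filter (fun a => P a b)).card : ℝ)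
      ≤ ∑ _b : β, c * (Fintype.card α : ℝ) := by
        apply Finset.sum_le_sum
        intro b _
        have hb := h b
        unfold pr at hb
        rw [div_le_iff₀ hα] at hb
        exact hb
    _ = c * ((Fintype.card α : ℝ) * (Fintype.card β : ℝ)) := by
        rw [Finset.sum_const]; simp; ring

lemma pr_snd_eq [Nonempty α] (Q : β → Prop) :
    pr (fun p : α × β => Q p.2) = pr Q := by
  have hα : (0:ℝ) < Fintype.card α := by exact_mod_cast Fintype.card_pos
  unfold pr
  have hf : Finset.univ.filter (fun p : α × β => Q p.2)
      = Finset.univ ×ˢ (Finset.univ.filter Q) := by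
    ext p; simp
  rw [hf, Finset.card_product, Fintype.card_prod]
  push_cast
  rw [Finset.card_univ]
  rw [mul_div_mul_left _ _ (ne_of_gt hα)]

lemma pr_mem_le (s : Finset α) : pr (fun a => a ∈ s) ≤ (s.card : ℝ) / (Fintype.card α : ℝ) := by
  unfold pr
  apply mydiv _ (by positivity)
  exact_mod_cast Finset.card_le_card (by intro a ha; simpa using ha)

end PR

section ROUND

/-- Rounding of `w` to the grid of spacing `2εT` shifted by `2εv`. -/
noncomputable def rnd (ε : ℝ) (T v : ℕ) (w : ℝ) : ℝ :=
  (2*ε*T) * ⌊(w - 2*ε*v)/(2*ε*T)⌋ + 2*ε*v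

/-- The shift `v` is good for the value `μ`: `μ` is at distance more than `ε`
from every boundary of the shifted grid. -/
def goodsh (ε : ℝ) (T : ℕ) (v : ℕ) (μ : ℝ) : Prop :=
  ∀ m : ℤ, ε < |μ - 2*ε*v - m*(2*ε*T)|

variable {ε : ℝ} {T v : ℕ}

lemma rnd_close (hε : 0 < ε) (hT : 0 < T) (μ : ℝ) :
    |rnd ε T v μ - μ| < 2*ε*T := by
  have hΔ : (0:ℝ) < 2*ε*T := by positivity
  set u : ℝ := μ - 2*ε*v with hu
  have h1 : (2*ε*T) * ⌊u/(2*ε*T)⌋ ≤ u := by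
    have := Int.floor_le (u/(2*ε*T))
    calc (2*ε*T) * ⌊u/(2*ε*T)⌋ ≤ (2*ε*T) * (u/(2*ε*T)) := by
          exact mul_le_mul_of_nonneg_left this (le_of_lt hΔ)
      _ = u := by field_simp
  have h2 : u - 2*ε*T < (2*ε*T) * ⌊u/(2*ε*T)⌋ := by
    have := Int.sub_one_lt_floor (u/(2*ε*T))
    have h3 : (2*ε*T) * (u/(2*ε*T) - 1) < (2*ε*T) * ⌊u/(2*ε*T)⌋ :=
      mul_lt_mul_of_pos_left this hΔ
    calc u - 2*ε*T = (2*ε*T) * (u/(2*ε*T) - 1) := by field_simp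
      _ < _ := h3
  have : rnd ε T v μ - μ = (2*ε*T) * ⌊u/(2*ε*T)⌋ - u := by
    unfold rnd; rw [hu]; ring
  rw [this, abs_lt]
  constructor <;> linarith

lemma rnd_stable (hε : 0 < ε) (hT : 0 < T) {μ : ℝ} (hg : goodsh ε T v μ)
    {w : ℝ} (hw : |w - μ| ≤ ε) : rnd ε T v w = rnd ε T v μ := by
  have hΔ : (0:ℝ) < 2*ε*T := by positivity
  set u : ℝ := μ - 2*ε*v with hu
  set q : ℤ := ⌊u/(2*ε*T)⌋ with hq
  have h1 : (q:ℝ)*(2*ε*T) ≤ u := by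
    have := Int.floor_le (u/(2*ε*T))
    rw [← hq] at this
    calc (q:ℝ)*(2*ε*T) ≤ (u/(2*ε*T))*(2*ε*T) := by
          exact mul_le_mul_of_nonneg_right this (le_of_lt hΔ)
      _ = u := by field_simp
  have h2 : u < ((q:ℝ)+1)*(2*ε*T) := by
    have := Int.lt_floor_add_one (u/(2*ε*T))
    rw [← hq] at this
    have h3 := mul_lt_mul_of_pos_right this hΔ
    calc u = (u/(2*ε*T))*(2*ε*T) := by field_simp
      _ < ((q:ℝ)+1)*(2*ε*T) := by push_cast at h3 ⊢; linarith
  have hg1 : ε < u - (q:ℝ)*(2*ε*T) := by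
    have := hg q
    rw [abs_of_nonneg (by rw [← hu] at *; linarith)] at this
    · linarith [this]
  have hg2 : ε < ((q:ℝ)+1)*(2*ε*T) - u := by
    have := hg (q+1)
    rw [abs_of_nonpos (by push_cast; rw [← hu] at *; linarith)] at this
    push_cast at this
    linarith
  have hwu1 : (q:ℝ)*(2*ε*T) ≤ w - 2*ε*v := by
    have := abs_le.mp hw
    linarith [this.1]
  have hwu2 : w - 2*ε*v < ((q:ℝ)+1)*(2*ε*T) := by
    have := abs_le.mp hw
    linarith [this.2]
  have hfloor : ⌊(w - 2*ε*v)/(2*ε*T)⌋ = q := by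
    rw [Int.floor_eq_iff]
    constructor
    · rw [le_div_iff₀ hΔ]; linarith
    · rw [div_lt_iff₀ hΔ]; push_cast; linarith
  unfold rnd
  rw [hfloor, ← hq]

lemma badcount (hε : 0 < ε) (hT : 2 ≤ T) (μ : ℝ) :
    (Finset.univ.filter (fun v : Fin T => ¬ goodsh ε T (v : ℕ) μ)).card ≤ 2 := by
  classical
  set c : ℝ := μ/(2*ε) with hc
  set F : ℤ := ⌊c + 1/2⌋ with hF
  have key : ∀ v : Fin T, ¬ goodsh ε T (v:ℕ) μ → ∃ mm : ℤ,
      |c - ((v:ℕ):ℝ) - (mm:ℝ)*(T:ℕ)| ≤ 1/2 := by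
    intro v hv
    unfold goodsh at hv
    push_neg at hv
    obtain ⟨mm, hmm⟩ := hv
    refine ⟨mm, ?_⟩
    have h2ε : (0:ℝ) < 2*ε := by positivity
    have hrw : μ - 2*ε*(v:ℕ) - mm*(2*ε*(T:ℕ)) = (2*ε) * (c - ((v:ℕ):ℝ) - (mm:ℝ)*(T:ℕ)) := by
      rw [hc]; field_simp
    rw [hrw, abs_mul, abs_of_pos h2ε] at hmm
    nlinarith [abs_nonneg (c - ((v:ℕ):ℝ) - (mm:ℝ)*(T:ℕ))]
  let J : Fin T → ℤ := fun v =>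
    if h : ¬ goodsh ε T (v:ℕ) μ then ((v:ℕ):ℤ) + (Classical.choose (key v h)) * T else 0
  refine le_trans (Finset.card_le_card_of_injOn
    (s := Finset.univ.filter (fun v : Fin T => ¬ goodsh ε T (v:ℕ) μ))
    (t := ({F - 1, F} : Finset ℤ)) J ?maps ?inj)
    (le_trans (Finset.card_insert_le _ _) (by simp))
  case maps =>
    intro v hv
    simp only [Finset.mem_coe, Finset.mem_filter, Finset.mem_univ, true_and] at hv
    have hJv : J v = ((v:ℕ):ℤ) + (Classical.choose (key v hv)) * T := dif_pos hv
    have habs := abs_le.mp (Classical.choose_spec (key v hv))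
    have hjle : (J v : ℝ) ≤ c + 1/2 := by rw [hJv]; push_cast; linarith [habs.1]
    have hjge : c - 1/2 ≤ (J v : ℝ) := by rw [hJv]; push_cast; linarith [habs.2]
    have h1 : J v ≤ F := by rw [hF]; exact Int.le_floor.mpr hjle
    have h2 : F ≤ J v + 1 := by
      have hFr : (F:ℝ) ≤ c + 1/2 := by rw [hF]; exact Int.floor_le _
      have : (F:ℝ) ≤ (J v : ℝ) + 1 := by linarith
      exact_mod_cast this
    show J v ∈ ({F - 1, F} : Finset ℤ)
    simp only [Finset.mem_insert, Finset.mem_singleton]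
    omega
  case inj =>
    intro v1 hv1 v2 hv2 hEq
    simp only [Finset.coe_filter, Set.mem_setOf_eq, Finset.mem_univ, true_and] at hv1 hv2
    have hJ1 : J v1 = ((v1:ℕ):ℤ) + (Classical.choose (key v1 hv1)) * T := dif_pos hv1
    have hJ2 : J v2 = ((v2:ℕ):ℤ) + (Classical.choose (key v2 hv2)) * T := dif_pos hv2
    set m1 : ℤ := Classical.choose (key v1 hv1)
    set m2 : ℤ := Classical.choose (key v2 hv2)
    rw [hJ1, hJ2] at hEq
    have hb1 : ((v1:ℕ):ℤ) < T := by exact_mod_cast v1.isLt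
    have hb2 : ((v2:ℕ):ℤ) < T := by exact_mod_cast v2.isLt
    have hnn1 : (0:ℤ) ≤ ((v1:ℕ):ℤ) := by positivity
    have hnn2 : (0:ℤ) ≤ ((v2:ℕ):ℤ) := by positivity
    have hdvd : ((v1:ℕ):ℤ) - ((v2:ℕ):ℤ) = (m2 - m1) * T := by linear_combination hEq
    rcases eq_or_ne m1 m2 with h | h
    · rw [h] at hdvd
      have : ((v1:ℕ):ℤ) = ((v2:ℕ):ℤ) := by simp at hdvd; linarith
      have : (v1:ℕ) = (v2:ℕ) := by exact_mod_cast this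
      exact Fin.ext this
    · exfalso
      have h1' : 1 ≤ |m2 - m1| := Int.one_le_abs (by omega)
      have hTpos : (0:ℤ) ≤ (T:ℤ) := by positivity
      have heq2 : |((v1:ℕ):ℤ) - ((v2:ℕ):ℤ)| = |m2 - m1| * T := by
        rw [hdvd, abs_mul, abs_of_nonneg hTpos]
      have hTle : (T:ℤ) ≤ |m2 - m1| * T := le_mul_of_one_le_left hTpos h1'
      have hlt : |((v1:ℕ):ℤ) - ((v2:ℕ):ℤ)| < T := abs_lt.mpr ⟨by omega, by omega⟩
      rw [heq2] at hlt
      linarith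
lemma badset_card (hε : 0 < ε) (hT : 2 ≤ T) {d : ℕ} (μ : Fin d → ℝ) :
    (Finset.univ.filter (fun v : Fin T => ∃ j, ¬ goodsh ε T (v:ℕ) (μ j))).card ≤ 2*d := by
  classical
  have h2 : Finset.univ.filter (fun v : Fin T => ∃ j, ¬ goodsh ε T (v:ℕ) (μ j)) ⊆
      Finset.univ.biUnion (fun j : Fin d =>
        Finset.univ.filter (fun v : Fin T => ¬ goodsh ε T (v:ℕ) (μ j))) := by
    intro v hv
    simp only [Finset.mem_filter, Finset.mem_biUnion, Finset.mem_univ, true_and] at *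
    exact hv
  refine le_trans (le_trans (Finset.card_le_card h2) Finset.card_biUnion_le) ?_
  calc ∑ j : Fin d, (Finset.univ.filter (fun v : Fin T => ¬ goodsh ε T (v:ℕ) (μ j))).card
      ≤ ∑ _j : Fin d, 2 := Finset.sum_le_sum (fun j _ => badcount hε hT (μ j))
    _ = 2*d := by simp [mul_comm]

end ROUND


section PISPLIT

lemma pr_pi_eval {k T : ℕ} (hT : 0 < T) (i : Fin k) (B : (Fin k → Fin T) → Finset (Fin T))
    (hB : ∀ t t' : Fin k → Fin T, (∀ l, l ≠ i → t l = t' l) → B t = B t')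
    {s : ℕ} (hs : ∀ t, (B t).card ≤ s) :
    pr (fun t : Fin k → Fin T => t i ∈ B t) ≤ (s : ℝ) / (T : ℝ) := by
  haveI : Nonempty (Fin T) := ⟨⟨0, hT⟩⟩
  set e := (Equiv.piSplitAt i (fun _ => Fin T)).symm with he
  rw [← pr_comp_equiv e (fun t => t i ∈ B t)]
  have key : ∀ p : Fin T × ({j : Fin k // j ≠ i} → Fin T), (e p) i = p.1 := by
    intro p
    rw [he]
    simp [Equiv.piSplitAt_symm_apply]
  have key2 : ∀ (v : Fin T) (r : {j : Fin k // j ≠ i} → Fin T),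
      B (e (v, r)) = B (e (⟨0, hT⟩, r)) := by
    intro v r
    apply hB
    intro l hl
    rw [he]
    simp [Equiv.piSplitAt_symm_apply, hl]
  have hpr : (fun p : Fin T × ({j : Fin k // j ≠ i} → Fin T) => (e p) i ∈ B (e p))
      = (fun p : Fin T × ({j : Fin k // j ≠ i} → Fin T) => p.1 ∈ B (e (⟨0, hT⟩, p.2))) := by
    funext p
    rw [key p, ← key2 p.1 p.2]
  rw [hpr]
  apply pr_fiber_le (P := fun (v : Fin T) (r : {j : Fin k // j ≠ i} → Fin T) =>
    v ∈ B (e (⟨0, hT⟩, r)))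
  intro r
  refine le_trans (pr_mem_le _) ?_
  rw [Fintype.card_fin]
  apply mydiv _ (by positivity)
  exact_mod_cast hs (e (⟨0, hT⟩, r))

end PISPLIT


section MAIN
variable {n k d m : ℕ} {ε δ : ℝ}

/-- Selection of the `i`-th shift. -/
def tsel (T k : ℕ) (t : Fin k → Fin T) (i : ℕ) : ℕ :=
  if h : i < k then (t ⟨i, h⟩ : ℕ) else 0

/-- The per-round rounding functions determined by the shifts `t`. -/
noncomputable def rfn (ε : ℝ) (T k : ℕ) (t : Fin k → Fin T) : ℕ → ℝ → ℝ :=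
  fun i w => rnd ε T (tsel T k t i) w

/-- The ideal (noise-free) transcript of responses. -/
noncomputable def idealY (O : Owner n k d ε δ) (r : ℕ → ℝ → ℝ) : ℕ → List (Fin d → ℝ)
  | 0 => []
  | i+1 => idealY O r i ++ [fun j => r i ((O.act (idealY O r i)).2 j)]

lemma idealY_length (O : Owner n k d ε δ) (r : ℕ → ℝ → ℝ) (i : ℕ) :
    (idealY O r i).length = i := by
  induction i with
  | zero => rfl
  | succ i ih => simp [idealY, ih]

lemma idealY_congr (O : Owner n k d ε δ) {r1 r2 : ℕ → ℝ → ℝ} (i : ℕ)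
    (h : ∀ l < i, r1 l = r2 l) : idealY O r1 i = idealY O r2 i := by
  induction i with
  | zero => rfl
  | succ i ih =>
    have hi : idealY O r1 i = idealY O r2 i := ih (fun l hl => h l (by omega))
    simp only [idealY, hi, h i (by omega)]

lemma run_length (O : Owner n k d ε δ) (S : Steward n k d m) (Z : Fin m → Bool) (i : ℕ) :
    (run O S Z i).length = i := by
  induction i with
  | zero => rfl
  | succ i ih => simp [run, ih]

lemma run_succ (O : Owner n k d ε δ) (S : Steward n k d m) (Z : Fin m → Bool) (i : ℕ) :
    run O S Z (i+1) = run O S Z i ++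
      [(S.r Z ((run O S Z i).map fun p => p.2.1)
          ((O.act ((run O S Z i).map fun p => p.1)).1
            (S.q Z ((run O S Z i).map fun p => p.2.1))),
        (O.act ((run O S Z i).map fun p => p.1)).1
          (S.q Z ((run O S Z i).map fun p => p.2.1)),
        (O.act ((run O S Z i).map fun p => p.1)).2)] := rfl

lemma run_good (hε : 0 < ε) {T : ℕ} (hT : 0 < T)
    (O : Owner n k d ε δ) (S : Steward n k d m) (Z : Fin m → Bool)
    (x : Fin n → Bool) (t : Fin k → Fin T)
    (hq : ∀ ws, S.q Z ws = x)
    (hr : ∀ ws w, S.r Z ws w = fun j => rnd ε T (tsel T k t ws.length) (w j))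
    (hGX : ∀ (i : Fin k) (j : Fin d),
      |(O.act (idealY O (rfn ε T k t) (i:ℕ))).1 x j - (O.act (idealY O (rfn ε T k t) (i:ℕ))).2 j| ≤ ε)
    (hGT : ∀ (i : Fin k) (j : Fin d),
      goodsh ε T ((t i : ℕ)) ((O.act (idealY O (rfn ε T k t) (i:ℕ))).2 j)) :
    ∀ i, i ≤ k → ((run O S Z i).map Prod.fst = idealY O (rfn ε T k t) i ∧
      ∀ p ∈ run O S Z i, ∀ j, |p.1 j - p.2.2 j| < 2*ε*T) := by
  intro i
  induction i with
  | zero => intro _; exact ⟨rfl, by simp [run]⟩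
  | succ i ih =>
    intro hik
    have hik' : i < k := by omega
    obtain ⟨hmap, hbnd⟩ := ih (by omega)
    have hws : ((run O S Z i).map fun p => (p.2.1 : Fin d → ℝ)).length = i := by
      rw [List.length_map, run_length]
    have htsel : tsel T k t i = (t ⟨i, hik'⟩ : ℕ) := dif_pos hik'
    have hstep := run_succ O S Z i
    rw [hq, hr, hws, hmap] at hstep
    have hY : ∀ j, rnd ε T (tsel T k t i) ((O.act (idealY O (rfn ε T k t) i)).1 x j)
        = rnd ε T (tsel T k t i) ((O.act (idealY O (rfn ε T k t) i)).2 j) := by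
      intro j
      have hclose := hGX ⟨i, hik'⟩ j
      have hgood := hGT ⟨i, hik'⟩ j
      simp only [Fin.val_mk] at hclose hgood
      rw [htsel]
      exact rnd_stable hε hT hgood hclose
    constructor
    · rw [hstep, List.map_append, hmap]
      show idealY O (rfn ε T k t) i ++ _ = idealY O (rfn ε T k t) (i+1)
      conv_rhs => rw [idealY]
      congr 1
      simp only [List.map_cons, List.map_nil, List.cons.injEq, and_true]
      funext j
      exact hY j
    · intro p hp j
      rw [hstep] at hp
      rcases List.mem_append.mp hp with h | h
      · exact hbnd p h j
      · simp only [List.mem_singleton] at h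
        subst h
        show |rnd ε T (tsel T k t i) ((O.act (idealY O (rfn ε T k t) i)).1 x j)
            - (O.act (idealY O (rfn ε T k t) i)).2 j| < 2*ε*T
        rw [hY j]
        exact rnd_close hε hT _

end MAIN

set_option maxHeartbeats 1000000 in
/-- Saks–Zhou steward: there is an absolute constant `C > 0` such that
for all positive `n, k, d` and all `ε > 0`, `δ > 0`, `0 < γ ≤ 1`, there is a one-query
`(ε′, kδ+γ)`-steward for `k` adaptively chosen `(ε,δ)`-concentrated functions
`{0,1}^n → ℝ^d` with error `ε′ ≤ C·k·d·ε/γ` and randomness complexity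
`m ≤ n + C·k·(log₂ k + log₂ d + log₂(1/γ) + 1)`. -/
theorem saks_zhou_steward :
    ∃ C : ℝ, 0 < C ∧
      ∀ n k d : ℕ, 0 < n → 0 < k → 0 < d →
        ∀ ε δ γ : ℝ, 0 < ε → 0 < δ → 0 < γ → γ ≤ 1 →
          ∃ (ε' : ℝ) (m : ℕ) (S : Steward n k d m),
            IsSteward n k d m ε δ ε' (k * δ + γ) S ∧
            ε' ≤ C * k * d * ε / γ ∧
            (m : ℝ) ≤ n + C * k * (Real.logb 2 (k : ℝ) + Real.logb 2 (d : ℝ) +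
              Real.logb 2 (1 / γ) + 1) := by
  refine ⟨12, by norm_num, ?_⟩
  intro n k d hn hk hd ε δ γ hε hδ hγ hγ1
  have hd1 : (1:ℝ) ≤ (d:ℝ) := by exact_mod_cast hd
  have hk1 : (1:ℝ) ≤ (k:ℝ) := by exact_mod_cast hk
  have hγinv : (1:ℝ) ≤ 1/γ := by
    rw [le_div_iff₀ hγ]; linarith
  set N : ℕ := ⌈(2*(d:ℝ)*(k:ℝ))/γ⌉₊ with hN
  have hNge : (2*(d:ℝ)*(k:ℝ))/γ ≤ (N:ℝ) := Nat.le_ceil _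
  have hNle : (N:ℝ) ≤ 3*(d:ℝ)*(k:ℝ)/γ := by
    have h1 : (N:ℝ) < (2*(d:ℝ)*(k:ℝ))/γ + 1 := Nat.ceil_lt_add_one (by positivity)
    have h2 : (1:ℝ) ≤ (d:ℝ)*(k:ℝ)/γ := by
      have hm : (d:ℝ)*(k:ℝ)*1 ≤ (d:ℝ)*(k:ℝ)*(1/γ) :=
        mul_le_mul_of_nonneg_left hγinv (by positivity)
      calc (1:ℝ) ≤ (d:ℝ)*(k:ℝ) := by nlinarith
        _ = (d:ℝ)*(k:ℝ)*1 := by ring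
        _ ≤ (d:ℝ)*(k:ℝ)*(1/γ) := hm
        _ = (d:ℝ)*(k:ℝ)/γ := by ring
    have h3 : (2*(d:ℝ)*(k:ℝ))/γ = 2*((d:ℝ)*(k:ℝ)/γ) := by ring
    have h4 : 3*(d:ℝ)*(k:ℝ)/γ = 3*((d:ℝ)*(k:ℝ)/γ) := by ring
    rw [h4]; rw [h3] at h1; linarith
  have hN2 : 2 ≤ N := by
    have h1lt : (1:ℝ) < (2*(d:ℝ)*(k:ℝ))/γ := by
      rw [lt_div_iff₀ hγ]; nlinarith
    have : 1 < N := Nat.lt_ceil.mpr (by exact_mod_cast h1lt)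
    omega
  set b : ℕ := Nat.clog 2 N with hb
  have hTN : N ≤ 2^b := Nat.le_pow_clog (by norm_num) N
  have hb1 : 1 ≤ b := by
    by_contra h
    have hb0 : b = 0 := by omega
    rw [hb0] at hTN
    simp at hTN
    omega
  have hbpred : 2^(b-1) < N := by
    rw [hb]; exact Nat.pow_pred_clog_lt_self (by norm_num) (by omega)
  have hT2N : 2^b ≤ 2*N := by
    have heq : 2^b = 2*2^(b-1) := by
      rw [← pow_succ']
      congr 1
      omega
    rw [heq]
    exact Nat.mul_le_mul_left 2 (Nat.le_of_lt hbpred)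
  set T : ℕ := 2^b with hT
  have hT2 : 2 ≤ T := le_trans hN2 hTN
  have hT0 : 0 < T := by omega
  haveI : Nonempty (Fin T) := ⟨⟨0, hT0⟩⟩
  set M : ℕ := n + k*b with hM
  have hcard : Fintype.card (Fin M → Bool) = Fintype.card ((Fin n → Bool) × (Fin k → Fin T)) := by
    simp only [Fintype.card_fun, Fintype.card_prod, Fintype.card_fin, Fintype.card_bool]
    rw [hM, hT, pow_add, ← pow_mul, Nat.mul_comm k b]
  set e : (Fin M → Bool) ≃ ((Fin n → Bool) × (Fin k → Fin T)) :=
    Fintype.equivOfCardEq hcard with he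
  set S : Steward n k d M :=
    ⟨fun Z _ => (e Z).1,
     fun Z ws w => fun j => rnd ε T (tsel T k (e Z).2 ws.length) (w j)⟩ with hS
  have hTreal : (2*(d:ℝ)*(k:ℝ))/γ ≤ (T:ℝ) := le_trans hNge (by exact_mod_cast hTN)
  have hTle : (T:ℝ) ≤ 6*(d:ℝ)*(k:ℝ)/γ := by
    have h1 : (T:ℝ) ≤ 2*(N:ℝ) := by exact_mod_cast hT2N
    calc (T:ℝ) ≤ 2*(N:ℝ) := h1
      _ ≤ 2*(3*(d:ℝ)*(k:ℝ)/γ) := by linarith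
      _ = 6*(d:ℝ)*(k:ℝ)/γ := by ring
  refine ⟨2*ε*(T:ℝ), M, S, ?_, ?_, ?_⟩
  · -- IsSteward
    intro O
    set Bst : Fin k → (Fin k → Fin T) → Finset (Fin T) := fun i t =>
      Finset.univ.filter (fun v : Fin T =>
        ∃ j : Fin d, ¬ goodsh ε T (v:ℕ) ((O.act (idealY O (rfn ε T k t) (i:ℕ))).2 j)) with hBst
    set PX : (Fin n → Bool) → (Fin k → Fin T) → Prop := fun x t =>
      ∃ i : Fin k, ∃ j : Fin d,
        |(O.act (idealY O (rfn ε T k t) (i:ℕ))).1 x j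
          - (O.act (idealY O (rfn ε T k t) (i:ℕ))).2 j| > ε with hPXdef
    set PS : (Fin k → Fin T) → Prop := fun t => ∃ i : Fin k, t i ∈ Bst i t with hPSdef
    have keystep : ∀ Z : Fin M → Bool,
        (∃ p ∈ run O S Z k, ∃ j : Fin d, |p.1 j - p.2.2 j| > 2*ε*(T:ℝ)) →
        (PX (e Z).1 (e Z).2 ∨ PS (e Z).2) := by
      intro Z hF
      by_contra hno
      push_neg at hno
      obtain ⟨hx, ht⟩ := hno
      simp only [hPXdef] at hx
      push_neg at hx
      have hGT : ∀ (i : Fin k) (j : Fin d),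
          goodsh ε T (((e Z).2 i : ℕ)) ((O.act (idealY O (rfn ε T k (e Z).2) (i:ℕ))).2 j) := by
        intro i j
        simp only [hPSdef] at ht
        push_neg at ht
        have hmem := ht i
        simp only [hBst, Finset.mem_filter, Finset.mem_univ, true_and, not_exists,
          not_not] at hmem
        exact hmem j
      obtain ⟨-, hbnd⟩ := run_good hε hT0 O S Z (e Z).1 (e Z).2
        (fun ws => rfl) (fun ws w => rfl) hx hGT k le_rfl
      obtain ⟨p, hp, j, hj⟩ := hF
      exact absurd hj (not_lt.mpr (le_of_lt (hbnd p hp j)))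
    have hXB : pr (fun p : (Fin n → Bool) × (Fin k → Fin T) => PX p.1 p.2) ≤ (k:ℝ)*δ := by
      apply pr_fiber_le
      intro t
      refine le_trans (pr_exists_fin (fun (i : Fin k) (x : Fin n → Bool) =>
        ∃ j : Fin d, |(O.act (idealY O (rfn ε T k t) (i:ℕ))).1 x j
          - (O.act (idealY O (rfn ε T k t) (i:ℕ))).2 j| > ε)) ?_
      have hconc : ∀ i : Fin k,
          pr (fun x : Fin n → Bool => ∃ j : Fin d,
            |(O.act (idealY O (rfn ε T k t) (i:ℕ))).1 x j
              - (O.act (idealY O (rfn ε T k t) (i:ℕ))).2 j| > ε) ≤ δ := by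
        intro i
        exact O.conc (idealY O (rfn ε T k t) (i:ℕ)) (by rw [idealY_length]; exact i.isLt)
      calc (∑ i : Fin k, pr (fun x : Fin n → Bool => ∃ j : Fin d,
            |(O.act (idealY O (rfn ε T k t) (i:ℕ))).1 x j
              - (O.act (idealY O (rfn ε T k t) (i:ℕ))).2 j| > ε))
          ≤ ∑ _i : Fin k, δ := Finset.sum_le_sum (fun i _ => hconc i)
        _ = (k:ℝ)*δ := by rw [Finset.sum_const]; simp [mul_comm]
    have hSB : pr (fun p : (Fin n → Bool) × (Fin k → Fin T) => PS p.2) ≤ γ := by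
      rw [pr_snd_eq]
      refine le_trans (pr_exists_fin (fun (i : Fin k) (t : Fin k → Fin T) => t i ∈ Bst i t)) ?_
      have heach : ∀ i : Fin k, pr (fun t : Fin k → Fin T => t i ∈ Bst i t)
          ≤ ((2*d : ℕ) : ℝ)/(T:ℝ) := by
        intro i
        apply pr_pi_eval hT0 i (Bst i)
        · intro t t' hagree
          have hYeq : idealY O (rfn ε T k t) (i:ℕ) = idealY O (rfn ε T k t') (i:ℕ) := by
            apply idealY_congr
            intro l hl
            have hlk : l < k := lt_trans hl i.isLt
            unfold rfn tsel
            rw [dif_pos hlk, dif_pos hlk]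
            have : (⟨l, hlk⟩ : Fin k) ≠ i := by
              intro hC
              have : l = (i:ℕ) := by
                have := congrArg Fin.val hC
                simpa using this
              omega
            rw [hagree ⟨l, hlk⟩ this]
          simp only [hBst]
          rw [hYeq]
        · intro t
          exact badset_card hε hT2 _
      calc (∑ i : Fin k, pr (fun t : Fin k → Fin T => t i ∈ Bst i t))
          ≤ ∑ _i : Fin k, ((2*d : ℕ) : ℝ)/(T:ℝ) := Finset.sum_le_sum (fun i _ => heach i)
        _ = (k:ℝ) * (((2*d : ℕ) : ℝ)/(T:ℝ)) := by rw [Finset.sum_const]; simp [mul_comm]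
        _ ≤ γ := by
          have hrw : (k:ℝ) * (((2*d : ℕ):ℝ)/(T:ℝ)) = (2*(d:ℝ)*(k:ℝ))/(T:ℝ) := by
            push_cast; ring
          rw [hrw, div_le_iff₀ (by exact_mod_cast hT0)]
          have := (div_le_iff₀ hγ).mp hTreal
          linarith
    calc pr (fun Z : Fin M → Bool =>
          ∃ p ∈ run O S Z k, ∃ j : Fin d, |p.1 j - p.2.2 j| > 2*ε*(T:ℝ))
        ≤ pr (fun Z : Fin M → Bool =>
            (fun p : (Fin n → Bool) × (Fin k → Fin T) => PX p.1 p.2 ∨ PS p.2) (e Z)) :=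
          pr_mono keystep
      _ = pr (fun p : (Fin n → Bool) × (Fin k → Fin T) => PX p.1 p.2 ∨ PS p.2) :=
          pr_comp_equiv e (fun p : (Fin n → Bool) × (Fin k → Fin T) => PX p.1 p.2 ∨ PS p.2)
      _ ≤ pr (fun p : (Fin n → Bool) × (Fin k → Fin T) => PX p.1 p.2)
          + pr (fun p : (Fin n → Bool) × (Fin k → Fin T) => PS p.2) := pr_or (fun p : (Fin n → Bool) × (Fin k → Fin T) => PX p.1 p.2)
            (fun p : (Fin n → Bool) × (Fin k → Fin T) => PS p.2)
      _ ≤ (k:ℝ)*δ + γ := add_le_add hXB hSB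
  · -- error bound
    calc 2*ε*(T:ℝ) ≤ 2*ε*(6*(d:ℝ)*(k:ℝ)/γ) := by
          apply mul_le_mul_of_nonneg_left hTle (by positivity)
      _ = 12*(k:ℝ)*(d:ℝ)*ε/γ := by ring
  · -- randomness bound
    have hL1 : 0 ≤ Real.logb 2 (k:ℝ) := Real.logb_nonneg (by norm_num) hk1
    have hL2 : 0 ≤ Real.logb 2 (d:ℝ) := Real.logb_nonneg (by norm_num) hd1
    have hL3 : 0 ≤ Real.logb 2 (1/γ) := Real.logb_nonneg (by norm_num) hγinv
    have hNpos : (0:ℝ) < (N:ℝ) := by exact_mod_cast (by omega : 0 < N)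
    have hblog : (b:ℝ) ≤ Real.logb 2 (N:ℝ) + 1 := by
      have hpow : ((2:ℝ))^(b-1 : ℕ) < (N:ℝ) := by exact_mod_cast hbpred
      have hlt : Real.logb 2 ((2:ℝ)^(b-1 : ℕ)) < Real.logb 2 (N:ℝ) :=
        Real.logb_lt_logb (by norm_num) (by positivity) hpow
      rw [Real.logb_pow, Real.logb_self_eq_one (by norm_num)] at hlt
      have hcast : (((b-1:ℕ)):ℝ) = (b:ℝ) - 1 := by
        rw [Nat.cast_sub hb1]; norm_num
      rw [hcast] at hlt
      linarith
    have hNlog : Real.logb 2 (N:ℝ) ≤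
        Real.logb 2 3 + Real.logb 2 (d:ℝ) + Real.logb 2 (k:ℝ) + Real.logb 2 (1/γ) := by
      have h1 : Real.logb 2 (N:ℝ) ≤ Real.logb 2 (3*(d:ℝ)*(k:ℝ)*(1/γ)) := by
        apply Real.logb_le_logb_of_le (by norm_num) hNpos
        calc (N:ℝ) ≤ 3*(d:ℝ)*(k:ℝ)/γ := hNle
          _ = 3*(d:ℝ)*(k:ℝ)*(1/γ) := by ring
      have h2 : Real.logb 2 (3*(d:ℝ)*(k:ℝ)*(1/γ))
          = Real.logb 2 3 + Real.logb 2 (d:ℝ) + Real.logb 2 (k:ℝ) + Real.logb 2 (1/γ) := by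
        rw [Real.logb_mul (by positivity) (by positivity),
          Real.logb_mul (by positivity) (by positivity),
          Real.logb_mul (by positivity) (by positivity)]
      rw [h2] at h1
      exact h1
    have hlog3 : Real.logb 2 3 ≤ 2 := by
      have h4 : Real.logb 2 ((2:ℝ)^(2:ℕ)) = 2 := by
        rw [Real.logb_pow, Real.logb_self_eq_one (by norm_num)]; norm_num
      calc Real.logb 2 3 ≤ Real.logb 2 ((2:ℝ)^(2:ℕ)) :=
            Real.logb_le_logb_of_le (by norm_num) (by norm_num) (by norm_num)
        _ = 2 := h4
    have hbfin : (b:ℝ) ≤ Real.logb 2 (k:ℝ) + Real.logb 2 (d:ℝ) + Real.logb 2 (1/γ) + 3 := by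
      linarith
    have hMcast : (M:ℝ) = (n:ℝ) + (k:ℝ)*(b:ℝ) := by
      rw [hM]; push_cast; ring
    rw [hMcast]
    have hk0 : (0:ℝ) ≤ (k:ℝ) := by positivity
    have hmul : (k:ℝ)*(b:ℝ) ≤ 12*(k:ℝ)*(Real.logb 2 (k:ℝ) + Real.logb 2 (d:ℝ)
        + Real.logb 2 (1/γ) + 1) := by
      nlinarith [mul_le_mul_of_nonneg_left hbfin hk0]
    linarith
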